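/- On $\S^n$ with $v(x)=x$, define $\lambda(r) = \frac{2\rho(r)}{r} - \rho'(r)$ for $r>0$ and $\lambda(0)=\frac{1}{n+1}$. Then for all $r>0$, $\frac{\rho(r)}{r} < \lambda(r) < \frac{2\rho(r)}{r}$, and $\Lambda := \max_{r\ge0}\lambda(r)$ satisfies $\frac{1}{n+1} \le \Lambda < \frac{2}{n+1}$. -/

import Mathlib

open intervalIntegral Real Filter MeasureTheory Set

/-- With `λ(r) = 2ρ(r)/r - ρ'(r)` for `r > 0` and `λ(0) = 1/(n+1)`,
one has `ρ(r)/r < λ(r) < 2ρ(r)/r` for all `r > 0`, and `Λ := max_{r ≥ 0} λ(r)`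
exists and satisfies `1/(n+1) ≤ Λ < 2/(n+1)`. The known facts `0 < ρ' < ρ/r`,
strict monotonicity of `ρ/r` and its limit `1/(n+1)` at `0⁺` are hypotheses. -/
lemma param_hasDerivAt (f : ℝ → ℝ) (hf : Continuous f) (r : ℝ) :
    HasDerivAt (fun s => ∫ x in (0:ℝ)..π, f x * Real.exp (-(s * Real.cos x)))
      (-∫ x in (0:ℝ)..π, (Real.cos x * f x) * Real.exp (-(r * Real.cos x))) r := by
  have key := intervalIntegral.hasDerivAt_integral_of_dominated_loc_of_deriv_le
    (𝕜 := ℝ) (μ := volume) (a := 0) (b := π)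
    (F := fun s x => f x * Real.exp (-(s * Real.cos x)))
    (F' := fun s x => (-(Real.cos x) * f x) * Real.exp (-(s * Real.cos x)))
    (x₀ := r) (bound := fun x => |f x| * Real.exp (|r| + 1)) (s := Metric.ball r 1) (Metric.ball_mem_nhds r one_pos)
    ?_ ?_ ?_ ?_ ?_ ?_
  · have h2 := key.2
    have : (∫ x in (0:ℝ)..π, (-(Real.cos x) * f x) * Real.exp (-(r * Real.cos x)))
        = -∫ x in (0:ℝ)..π, (Real.cos x * f x) * Real.exp (-(r * Real.cos x)) := by
      rw [← intervalIntegral.integral_neg]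
      apply intervalIntegral.integral_congr
      intro x _; ring
    rwa [this] at h2
  · filter_upwards with s
    exact ((hf.mul (by continuity)).aestronglyMeasurable).restrict
  · exact (hf.mul (by continuity)).intervalIntegrable _ _
  · exact (((continuous_cos.neg.mul hf).mul (by continuity)).aestronglyMeasurable).restrict
  · filter_upwards with t ht x hx
    have hx' : |x| ≤ |r| + 1 := by
      have := abs_sub_abs_le_abs_sub x r
      have h2 : |x - r| < 1 := by simpa [Real.dist_eq] using hx
      linarith
    have hexp : Real.exp (-(x * Real.cos t)) ≤ Real.exp (|r| + 1) := by
      apply Real.exp_le_exp.2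
      calc -(x * Real.cos t) ≤ |x * Real.cos t| := neg_le_abs _
        _ = |x| * |Real.cos t| := abs_mul _ _
        _ ≤ (|r| + 1) * 1 := by
            apply mul_le_mul hx' (abs_cos_le_one t) (abs_nonneg _) (by positivity)
        _ = |r| + 1 := mul_one _
    calc ‖(-(Real.cos t) * f t) * Real.exp (-(x * Real.cos t))‖
        = |Real.cos t| * |f t| * Real.exp (-(x * Real.cos t)) := by
          rw [Real.norm_eq_abs, abs_mul, abs_mul, abs_neg, Real.abs_exp]
      _ ≤ 1 * |f t| * Real.exp (|r| + 1) := by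
          apply mul_le_mul (mul_le_mul_of_nonneg_right (abs_cos_le_one t) (abs_nonneg _))
            hexp (Real.exp_nonneg _) (by positivity)
      _ = |f t| * Real.exp (|r| + 1) := by ring
  · exact ((hf.abs.mul continuous_const)).intervalIntegrable _ _
  · filter_upwards with t ht x hx
    have h1 : HasDerivAt (fun s : ℝ => -(s * Real.cos t)) (-(1 * Real.cos t)) x :=
      ((hasDerivAt_id x).mul_const _).neg
    have h2 := h1.exp.const_mul (f t)
    refine h2.congr_deriv ?_
    ring

section helpers
variable (n : ℕ)

noncomputable def Dfun : ℝ → ℝ :=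
  fun r => ∫ x in (0:ℝ)..π, (Real.sin x ^ (n-1)) * Real.exp (-(r * Real.cos x))
noncomputable def Nfun : ℝ → ℝ :=
  fun r => ∫ x in (0:ℝ)..π, (Real.cos x * Real.sin x ^ (n-1)) * Real.exp (-(r * Real.cos x))
noncomputable def Mfun : ℝ → ℝ :=
  fun r => ∫ x in (0:ℝ)..π,
    (Real.cos x * (Real.cos x * Real.sin x ^ (n-1))) * Real.exp (-(r * Real.cos x))

lemma contS : Continuous (fun x => Real.sin x ^ (n-1)) := by continuity

lemma hasDerivD (r : ℝ) : HasDerivAt (Dfun n) (-(Nfun n r)) r :=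
  param_hasDerivAt _ (contS n) r

lemma hasDerivN (r : ℝ) : HasDerivAt (Nfun n) (-(Mfun n r)) r :=
  param_hasDerivAt _ (continuous_cos.mul (contS n)) r

lemma contD : Continuous (Dfun n) :=
  continuous_iff_continuousAt.2 fun s => (hasDerivD n s).continuousAt

lemma contN : Continuous (Nfun n) :=
  continuous_iff_continuousAt.2 fun s => (hasDerivN n s).continuousAt

lemma contM : Continuous (Mfun n) :=
  continuous_iff_continuousAt.2 fun s =>
    (param_hasDerivAt _ (continuous_cos.mul (continuous_cos.mul (contS n))) s).continuousAt

lemma Dpos (r : ℝ) : 0 < Dfun n r := by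
  apply intervalIntegral.intervalIntegral_pos_of_pos_on
  · exact ((contS n).mul (by continuity)).intervalIntegrable _ _
  · intro x hx
    have hs : 0 < Real.sin x := Real.sin_pos_of_pos_of_lt_pi hx.1 hx.2
    positivity
  · exact Real.pi_pos

lemma Nzero (hn : 1 ≤ n) : Nfun n 0 = 0 := by
  have h : ∀ x ∈ Set.uIcc (0:ℝ) π, HasDerivAt (fun x => Real.sin x ^ n / n)
      (Real.cos x * Real.sin x ^ (n-1)) x := by
    intro x _
    have h1 := ((Real.hasDerivAt_sin x).pow n).div_const (n : ℝ)
    refine h1.congr_deriv ?_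
    have hn0 : (n : ℝ) ≠ 0 := Nat.cast_ne_zero.2 (by omega)
    rw [div_eq_iff hn0]
    ring
  have hint : IntervalIntegrable (fun x => Real.cos x * Real.sin x ^ (n-1)) volume 0 π :=
    (continuous_cos.mul (contS n)).intervalIntegrable _ _
  have := intervalIntegral.integral_eq_sub_of_hasDerivAt h hint
  simp only [Nfun, zero_mul, neg_zero, Real.exp_zero, mul_one]
  rw [this, Real.sin_pi, Real.sin_zero, zero_pow (by omega), zero_div]
  ring

end helpers

theorem stmt16 (n : ℕ) (hn : 1 ≤ n) (ρ lam : ℝ → ℝ)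
    (hρ : ∀ r, ρ r =
      -(∫ x in (0:ℝ)..π, Real.cos x * Real.exp (-(r * Real.cos x)) * (Real.sin x) ^ (n - 1)) /
        (∫ x in (0:ℝ)..π, Real.exp (-(r * Real.cos x)) * (Real.sin x) ^ (n - 1)))
    (hρ' : ∀ r : ℝ, 0 < r → 0 < deriv ρ r ∧ deriv ρ r < ρ r / r)
    (hanti : StrictAntiOn (fun r => ρ r / r) (Set.Ioi 0))
    (hlim : Tendsto (fun r => ρ r / r) (nhdsWithin 0 (Set.Ioi 0)) (nhds (1 / (n + 1))))
    (hlam : ∀ r : ℝ, 0 < r → lam r = 2 * ρ r / r - deriv ρ r)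
    (hlam0 : lam 0 = 1 / (n + 1)) :
    (∀ r : ℝ, 0 < r → ρ r / r < lam r ∧ lam r < 2 * ρ r / r) ∧
    ∃ Λ : ℝ, IsGreatest (lam '' Set.Ici 0) Λ ∧
      1 / (n + 1) ≤ Λ ∧ Λ < 2 / (n + 1) := by
  -- ρ in terms of Nfun, Dfun
  have hρeq : ρ = fun r => -(Nfun n r) / Dfun n r := by
    funext r
    rw [hρ r]
    congr 1
    · congr 1
      apply intervalIntegral.integral_congr
      intro x _; ring
    · apply intervalIntegral.integral_congr
      intro x _; ring
  have hρcont : Continuous ρ := by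
    rw [hρeq]
    exact (contN n).neg.div (contD n) (fun r => (Dpos n r).ne')
  have hρd : ∀ r, HasDerivAt ρ
      ((Mfun n r * Dfun n r - Nfun n r * Nfun n r) / (Dfun n r) ^ 2) r := by
    intro r
    have hu : HasDerivAt (fun r => -(Nfun n r)) (Mfun n r) r := by
      have := (hasDerivN n r).neg; rwa [neg_neg] at this
    have h := hu.div (hasDerivD n r) (Dpos n r).ne'
    rw [hρeq]
    refine h.congr_deriv ?_
    ring
  have hderiv : ∀ r, deriv ρ r
      = (Mfun n r * Dfun n r - Nfun n r * Nfun n r) / (Dfun n r) ^ 2 :=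
    fun r => (hρd r).deriv
  have hcontderiv : Continuous (deriv ρ) := by
    have : deriv ρ = fun r =>
        (Mfun n r * Dfun n r - Nfun n r * Nfun n r) / (Dfun n r) ^ 2 := funext hderiv
    rw [this]
    exact (((contM n).mul (contD n)).sub ((contN n).mul (contN n))).div
      ((contD n).pow 2) (fun r => pow_ne_zero 2 (Dpos n r).ne')
  have hρ0 : ρ 0 = 0 := by rw [hρeq]; simp [Nzero n hn]
  -- deriv ρ 0 = 1/(n+1)
  have hderiv0 : deriv ρ 0 = 1 / ((n : ℝ) + 1) := by
    have h : HasDerivAt ρ (deriv ρ 0) 0 := (hρd 0).differentiableAt.hasDerivAt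
    have hslope := hasDerivAt_iff_tendsto_slope.1 h
    have hslope' : Tendsto (fun r => ρ r / r) (nhdsWithin 0 (Set.Ioi 0)) (nhds (deriv ρ 0)) := by
      apply Tendsto.congr' _ (hslope.mono_left
        (nhdsWithin_mono _ (fun x hx => Set.mem_compl_singleton_iff.2 (ne_of_gt hx))))
      filter_upwards [self_mem_nhdsWithin] with r hr
      simp [slope_def_field, hρ0]
    exact tendsto_nhds_unique hslope' hlim
  -- ρ ≤ 1
  have hρle1 : ∀ r : ℝ, ρ r ≤ 1 := by
    intro r
    rw [hρeq]
    rw [div_le_one (Dpos n r)]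
    have : -(Nfun n r) = ∫ x in (0:ℝ)..π,
        -((Real.cos x * Real.sin x ^ (n-1)) * Real.exp (-(r * Real.cos x))) := by
      rw [intervalIntegral.integral_neg]; rfl
    rw [this]
    have hce : Continuous (fun x => Real.exp (-(r * Real.cos x))) :=
      Real.continuous_exp.comp ((continuous_const.mul Real.continuous_cos).neg)
    apply intervalIntegral.integral_mono_on Real.pi_pos.le
      ((((continuous_cos.mul (contS n)).mul hce).neg).intervalIntegrable _ _)
      (((contS n).mul hce).intervalIntegrable _ _)
    intro x hx
    have hS : (0:ℝ) ≤ Real.sin x ^ (n-1) :=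
      pow_nonneg (Real.sin_nonneg_of_nonneg_of_le_pi hx.1 hx.2) _
    have hc : -1 ≤ Real.cos x := neg_one_le_cos x
    have he : (0:ℝ) < Real.exp (-(r * Real.cos x)) := Real.exp_pos _
    simp only [Pi.mul_apply, Pi.neg_apply]
    nlinarith [mul_nonneg (mul_nonneg (by linarith : (0:ℝ) ≤ 1 + Real.cos x) hS) he.le]
  -- ρ r / r < 1/(n+1) for r > 0
  have hglt : ∀ r : ℝ, 0 < r → ρ r / r < 1 / ((n : ℝ) + 1) := by
    intro r hr
    have h1 : ρ r / r < ρ (r/2) / (r/2) :=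
      hanti (Set.mem_Ioi.2 (half_pos hr)) (Set.mem_Ioi.2 hr) (half_lt_self hr)
    have h2 : ρ (r/2) / (r/2) ≤ 1 / ((n : ℝ) + 1) := by
      apply ge_of_tendsto hlim
      filter_upwards [Ioo_mem_nhdsGT_of_mem ⟨le_refl 0, half_pos hr⟩] with t ht
      exact (hanti (Set.mem_Ioi.2 ht.1) (Set.mem_Ioi.2 (half_pos hr)) ht.2).le
    linarith
  -- part 1
  have part1 : ∀ r : ℝ, 0 < r → ρ r / r < lam r ∧ lam r < 2 * ρ r / r := by
    intro r hr
    obtain ⟨h1, h2⟩ := hρ' r hr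
    rw [hlam r hr]
    have heq : 2 * ρ r / r = 2 * (ρ r / r) := by ring
    constructor <;> [linarith; linarith]
  refine ⟨part1, ?_⟩
  -- tendsto lam at 0+
  have htend : Tendsto lam (nhdsWithin 0 (Set.Ioi 0)) (nhds (1 / ((n : ℝ) + 1))) := by
    have h1 : Tendsto (fun r => 2 * (ρ r / r) - deriv ρ r) (nhdsWithin 0 (Set.Ioi 0))
        (nhds (2 * (1 / ((n : ℝ) + 1)) - deriv ρ 0)) :=
      (hlim.const_mul 2).sub (hcontderiv.continuousAt.tendsto.mono_left nhdsWithin_le_nhds)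
    rw [hderiv0] at h1
    have heq : 2 * (1 / ((n : ℝ) + 1)) - 1 / ((n : ℝ) + 1) = 1 / ((n : ℝ) + 1) := by ring
    rw [heq] at h1
    apply h1.congr'
    filter_upwards [self_mem_nhdsWithin] with r hr
    rw [hlam r hr]; ring
  set r₀ : ℝ := 4 * ((n : ℝ) + 1) with hr₀def
  have hr₀pos : 0 < r₀ := by positivity
  have hbig : ∀ r : ℝ, r₀ < r → lam r < 1 / ((n : ℝ) + 1) := by
    intro r hrr
    have hr : 0 < r := lt_trans hr₀pos hrr
    have h1 : lam r < 2 * ρ r / r := (part1 r hr).2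
    have h2 : 2 * ρ r / r ≤ 2 / r := by gcongr <;> linarith [hρle1 r]
    have h3 : (2:ℝ) / r < 2 / r₀ := by gcongr
    have h4 : (2:ℝ) / r₀ < 1 / ((n : ℝ) + 1) := by
      rw [div_lt_div_iff₀ hr₀pos (by positivity)]
      have : (0:ℝ) ≤ n := Nat.cast_nonneg n
      nlinarith
    linarith
  -- continuity of lam on Icc 0 r₀
  have hcontOn : ContinuousOn lam (Set.Icc 0 r₀) := by
    intro r hr
    rcases eq_or_lt_of_le hr.1 with h0 | h0
    · subst h0
      have hIci : Tendsto lam (nhdsWithin 0 (Set.Ici 0)) (nhds (lam 0)) := by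
        have hset : Set.Ici (0:ℝ) = Set.Ioi 0 ∪ {0} := by
          ext x
          simp [le_iff_lt_or_eq, eq_comm, or_comm]
        rw [hset, nhdsWithin_union, tendsto_sup]
        refine ⟨by rw [hlam0]; exact htend, ?_⟩
        rw [nhdsWithin_singleton]
        exact tendsto_pure_nhds lam 0
      show Tendsto lam (nhdsWithin 0 (Set.Icc 0 r₀)) (nhds (lam 0))
      exact hIci.mono_left (nhdsWithin_mono 0 Set.Icc_subset_Ici_self)
    · apply ContinuousAt.continuousWithinAt
      have heq : (fun s => 2 * ρ s / s - deriv ρ s) =ᶠ[nhds r] lam := by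
        filter_upwards [Ioi_mem_nhds h0] with s hs
        exact (hlam s hs).symm
      apply ContinuousAt.congr _ heq
      exact ((continuous_const.mul hρcont).continuousAt.div continuousAt_id h0.ne').sub
        hcontderiv.continuousAt
  obtain ⟨x₀, hx₀mem, hmax⟩ := isCompact_Icc.exists_isMaxOn
    ⟨0, Set.left_mem_Icc.2 hr₀pos.le⟩ hcontOn
  have hΛge : 1 / ((n : ℝ) + 1) ≤ lam x₀ := by
    have h := hmax (Set.left_mem_Icc.2 hr₀pos.le)
    simp only [Set.mem_setOf_eq] at h
    rwa [hlam0] at h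
  refine ⟨lam x₀, ⟨⟨x₀, hx₀mem.1, rfl⟩, ?_⟩, hΛge, ?_⟩
  · rintro y ⟨r, hr, rfl⟩
    rcases le_or_gt r r₀ with h | h
    · exact hmax ⟨hr, h⟩
    · exact le_trans (hbig r h).le hΛge
  · rcases eq_or_lt_of_le hx₀mem.1 with h0 | h0
    · rw [← h0, hlam0]
      have hp : (0:ℝ) < (n:ℝ)+1 := by positivity
      rw [div_lt_div_iff₀ hp hp]
      nlinarith
    · have h1 : lam x₀ < 2 * ρ x₀ / x₀ := (part1 x₀ h0).2
      have h2 : ρ x₀ / x₀ < 1 / ((n : ℝ) + 1) := hglt x₀ h0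
      have heq : 2 * ρ x₀ / x₀ = 2 * (ρ x₀ / x₀) := by ring
      have heq2 : (2:ℝ) / ((n : ℝ) + 1) = 2 * (1 / ((n : ℝ) + 1)) := by ring
      linarith
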